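/- Let d = p ≡ 7 (mod 8) be prime and let v be the Legendre vector built from a unimodular x₁ and √x₀ (x₀ = −2−√(d+1)). Then for every j ≠ 0 with (j/d) = 1, ⟨v|X^{−2j}|v⟩ = (d−3)/2 − ((d+1)/4)·(1/x₁²) − ((d−3)/4)·x₁² − 2√x₀·x₁. -/

import Mathlib

open Matrix Finset ComplexConjugate

noncomputable section

/-- ω = exp(2πi/d) -/
def omg (d : ℕ) : ℂ := Complex.exp (2 * Real.pi * Complex.I / d)

/-- τ = -exp(πi/d) -/
def tau (d : ℕ) : ℂ := -Complex.exp (Real.pi * Complex.I / d)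

/-- The clock matrix `Z`, with `Z|r⟩ = ω^r |r⟩`. -/
def Zmat (d : ℕ) [NeZero d] : Matrix (ZMod d) (ZMod d) ℂ :=
  Matrix.diagonal fun r => omg d ^ r.val

/-- The shift matrix `X`, with `X|r⟩ = |r+1⟩` (indices mod d). -/
def Xmat (d : ℕ) [NeZero d] : Matrix (ZMod d) (ZMod d) ℂ :=
  Matrix.of fun r s => if r = s + 1 then 1 else 0

/-- The displacement operators `D_{j,k} = τ^{jk} X^j Z^k`. -/
def Dmat (d : ℕ) [NeZero d] (j k : ZMod d) : Matrix (ZMod d) (ZMod d) ℂ :=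
  tau d ^ (j.val * k.val) • (Xmat d ^ j.val * Zmat d ^ k.val)

/-- Standard Hermitian inner product, conjugate-linear in the first argument. -/
def ip {d : ℕ} [NeZero d] (u w : ZMod d → ℂ) : ℂ := ∑ k, conj (u k) * w k

lemma Xmat_mulVec {p : ℕ} [NeZero p] (w : ZMod p → ℂ) (r : ZMod p) :
    (Xmat p *ᵥ w) r = w (r - 1) := by
  simp only [Xmat, mulVec, dotProduct, Matrix.of_apply]
  rw [Finset.sum_eq_single (r - 1)]
  · simp
  · intro b _ hb; rw [if_neg, zero_mul]; intro h; apply hb; rw [h]; ring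
  · simp

lemma Xmat_pow_mulVec {p : ℕ} [NeZero p] (n : ℕ) (w : ZMod p → ℂ) (r : ZMod p) :
    ((Xmat p ^ n) *ᵥ w) r = w (r - n) := by
  induction n generalizing r with
  | zero => simp
  | succ n ih =>
    rw [pow_succ', ← Matrix.mulVec_mulVec, Xmat_mulVec, ih]
    congr 1
    push_cast
    ring

lemma sum_quadChar_shift {p : ℕ} [Fact p.Prime] (hp2 : p ≠ 2) (c : ZMod p) (hc : c ≠ 0) :
    ∑ r : ZMod p, quadraticChar (ZMod p) r * quadraticChar (ZMod p) (r + c) = -1 := by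
  have hchar : ringChar (ZMod p) ≠ 2 := by rw [ZMod.ringChar_zmod_n]; exact_mod_cast hp2
  set χ := quadraticChar (ZMod p) with hχ
  have h0 : χ (0 : ZMod p) * χ ((0 : ZMod p) + c) = 0 := by
    simp [hχ, quadraticChar_zero]
  rw [← Finset.add_sum_erase _ _ (Finset.mem_univ (0 : ZMod p)), h0, zero_add]
  have hstep : ∀ r ∈ Finset.univ.erase (0 : ZMod p), χ r * χ (r + c) = χ (1 + c * r⁻¹) := by
    intro r hr
    have hr0 : r ≠ 0 := Finset.ne_of_mem_erase hr
    have h1 : r + c = r * (1 + c * r⁻¹) := by field_simp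
    rw [h1, _root_.map_mul, ← mul_assoc, ← sq, quadraticChar_sq_one hr0, one_mul]
  rw [Finset.sum_congr rfl hstep]
  have hbij : ∑ r ∈ Finset.univ.erase (0 : ZMod p), χ (1 + c * r⁻¹)
      = ∑ t ∈ Finset.univ.erase (1 : ZMod p), χ t := by
    refine Finset.sum_nbij' (fun r => 1 + c * r⁻¹) (fun t => c * (t - 1)⁻¹) ?_ ?_ ?_ ?_ ?_
    · intro r hr
      have hr0 : r ≠ 0 := Finset.ne_of_mem_erase hr
      simp only [Finset.mem_erase, Finset.mem_univ, and_true]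
      intro h
      have h2 : c * r⁻¹ = 0 := by linear_combination h
      rcases mul_eq_zero.mp h2 with h3 | h3
      · exact hc h3
      · exact hr0 (inv_eq_zero.mp h3)
    · intro t ht
      have ht1 : t ≠ 1 := Finset.ne_of_mem_erase ht
      simp only [Finset.mem_erase, Finset.mem_univ, and_true]
      intro h
      rcases mul_eq_zero.mp h with h3 | h3
      · exact hc h3
      · exact ht1 (sub_eq_zero.mp (inv_eq_zero.mp h3))
    · intro r hr
      have hr0 : r ≠ 0 := Finset.ne_of_mem_erase hr
      field_simp
      rw [add_sub_cancel_left, div_self hc]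
    · intro t ht
      have ht1 : t - 1 ≠ 0 := sub_ne_zero.mpr (Finset.ne_of_mem_erase ht)
      field_simp
      ring
    · intro r hr; rfl
  rw [hbij]
  have := quadraticChar_sum_zero hchar
  rw [← Finset.add_sum_erase _ χ (Finset.mem_univ (1 : ZMod p))] at this
  rw [_root_.map_one] at this
  omega

set_option maxHeartbeats 1000000 in
/-- for d = p ≡ 7 (mod 8) prime and v the Legendre vector, for every
j ≠ 0 with (j/d) = 1 we have
`⟨v|X^{−2j}|v⟩ = (d−3)/2 − ((d+1)/4)(1/x₁²) − ((d−3)/4)x₁² − 2√x₀·x₁`. -/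
theorem legendre_vector_xoverlap_7mod8 (p : ℕ) [NeZero p] (hp : p.Prime) (hp8 : p % 8 = 7)
    (x₁ : ℂ) (hx₁ : ‖x₁‖ = 1) (v : ZMod p → ℂ)
    (hv0 : v 0 = Complex.I * Real.sqrt (2 + Real.sqrt (p + 1)))
    (hvQ : ∀ j : ZMod p, j ≠ 0 → IsSquare j → v j = x₁)
    (hvN : ∀ j : ZMod p, j ≠ 0 → ¬IsSquare j → v j = -1 / x₁) :
    ∀ j : ZMod p, j ≠ 0 → IsSquare j →
      ip v ((Xmat p ^ (-2 * j : ZMod p).val) *ᵥ v) =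
        ((p : ℂ) - 3) / 2 - (((p : ℂ) + 1) / 4) * (1 / x₁ ^ 2)
          - (((p : ℂ) - 3) / 4) * x₁ ^ 2
          - 2 * (Complex.I * Real.sqrt (2 + Real.sqrt (p + 1))) * x₁ := by
  intro j hj hsqj
  haveI : Fact p.Prime := ⟨hp⟩
  have hp7 : 7 ≤ p := by omega
  have hp2 : p ≠ 2 := by omega
  have hchar : ringChar (ZMod p) ≠ 2 := by
    rw [ZMod.ringChar_zmod_n]; exact_mod_cast hp2
  set χ := quadraticChar (ZMod p) with hχ
  have h2ne : (2 : ZMod p) ≠ 0 := Ring.two_ne_zero hchar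
  set c : ZMod p := 2 * j with hcdef
  have hc : c ≠ 0 := mul_ne_zero h2ne hj
  have hsq2 : IsSquare (2 : ZMod p) := (ZMod.exists_sq_eq_two_iff hp2).mpr (Or.inr hp8)
  have hsqc : IsSquare c := hsq2.mul hsqj
  have hχc : χ c = 1 := (quadraticChar_one_iff_isSquare hc).mpr hsqc
  have hp4 : p % 4 = 3 := by omega
  have hnsq1 : ¬IsSquare (-1 : ZMod p) := by
    rw [ZMod.exists_sq_eq_neg_one_iff]; simp [hp4]
  have hχn1 : χ (-1 : ZMod p) = -1 := quadraticChar_neg_one_iff_not_isSquare.mpr hnsq1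
  have hχnc : χ (-c) = -1 := by
    rw [show (-c : ZMod p) = -1 * c by ring, _root_.map_mul, hχn1, hχc]; ring
  have hncne : (-c : ZMod p) ≠ 0 := neg_ne_zero.mpr hc
  have hnsqc : ¬IsSquare (-c : ZMod p) := quadraticChar_neg_one_iff_not_isSquare.mp hχnc
  have hx1 : x₁ ≠ 0 := by
    intro h; rw [h] at hx₁; simp at hx₁
  have hmc : conj x₁ * x₁ = 1 := by
    rw [mul_comm, Complex.mul_conj, Complex.normSq_eq_norm_sq, hx₁]; norm_num
  have hconj : conj x₁ = x₁⁻¹ := eq_inv_of_mul_eq_one_left hmc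
  have hconjN : conj (-1 / x₁) = -x₁ := by
    rw [show (-1 / x₁ : ℂ) = -(x₁⁻¹) by field_simp, map_neg, map_inv₀, hconj, inv_inv]
  set t : ℂ := Complex.I * Real.sqrt (2 + Real.sqrt (p + 1)) with ht
  have hconj0 : conj (v 0) = -t := by
    rw [hv0, ht, _root_.map_mul, Complex.conj_I, Complex.conj_ofReal]; ring
  have hkey : ∀ k : ZMod p, ((Xmat p ^ (-2 * j : ZMod p).val) *ᵥ v) k = v (k + c) := by
    intro k
    rw [Xmat_pow_mulVec]
    congr 1
    rw [ZMod.natCast_val, ZMod.cast_id, hcdef]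
    ring
  unfold ip
  rw [Finset.sum_congr rfl fun k _ => by rw [hkey k]]
  have h0mem : (-c : ZMod p) ∈ Finset.univ.erase (0 : ZMod p) := by
    simp [hncne]
  rw [← Finset.add_sum_erase _ _ (Finset.mem_univ (0 : ZMod p)),
    ← Finset.add_sum_erase _ _ h0mem]
  set s := (Finset.univ.erase (0 : ZMod p)).erase (-c) with hs
  have hvc : v c = x₁ := hvQ c hc hsqc
  have hvnc : v (-c) = -1 / x₁ := hvN _ hncne hnsqc
  have hf0 : conj (v 0) * v (0 + c) = -t * x₁ := by rw [zero_add, hvc, hconj0]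
  have hfnc : conj (v (-c)) * v (-c + c) = -x₁ * t := by
    rw [neg_add_cancel, hvnc, hconjN, hv0]
  have hmain : ∀ r ∈ s, conj (v r) * v (r + c) =
      (2 - x₁⁻¹ ^ 2 - x₁ ^ 2) / 4
      + (x₁ ^ 2 - x₁⁻¹ ^ 2) / 4 * ((χ r : ℤ) : ℂ)
      - (x₁ ^ 2 - x₁⁻¹ ^ 2) / 4 * ((χ (r + c) : ℤ) : ℂ)
      + (2 + x₁⁻¹ ^ 2 + x₁ ^ 2) / 4 * (((χ r : ℤ) : ℂ) * ((χ (r + c) : ℤ) : ℂ)) := by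
    intro r hr
    have hrnc : r ≠ -c := Finset.ne_of_mem_erase hr
    have hr0 : r ≠ 0 := Finset.ne_of_mem_erase (Finset.mem_of_mem_erase hr)
    have hrc0 : r + c ≠ 0 := fun h => hrnc (by linear_combination h)
    by_cases h1 : IsSquare r <;> by_cases h2 : IsSquare (r + c)
    · rw [hvQ r hr0 h1, hvQ _ hrc0 h2, hconj,
        (quadraticChar_one_iff_isSquare hr0).mpr h1,
        (quadraticChar_one_iff_isSquare hrc0).mpr h2]
      push_cast
      field_simp
      ring
    · rw [hvQ r hr0 h1, hvN _ hrc0 h2, hconj,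
        (quadraticChar_one_iff_isSquare hr0).mpr h1,
        quadraticChar_neg_one_iff_not_isSquare.mpr h2]
      push_cast
      field_simp
      ring
    · rw [hvN r hr0 h1, hvQ _ hrc0 h2, hconjN,
        quadraticChar_neg_one_iff_not_isSquare.mpr h1,
        (quadraticChar_one_iff_isSquare hrc0).mpr h2]
      push_cast
      field_simp
      ring
    · rw [hvN r hr0 h1, hvN _ hrc0 h2, hconjN,
        quadraticChar_neg_one_iff_not_isSquare.mpr h1,
        quadraticChar_neg_one_iff_not_isSquare.mpr h2]
      push_cast
      field_simp
      ring
  rw [Finset.sum_congr rfl hmain]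
  have hcard : s.card = p - 2 := by
    rw [hs, Finset.card_erase_of_mem h0mem,
      Finset.card_erase_of_mem (Finset.mem_univ _), Finset.card_univ, ZMod.card]
    omega
  have hz1 : ∑ r ∈ s, χ r = 1 := by
    have e0 : χ (0 : ZMod p) + ∑ r ∈ Finset.univ.erase (0 : ZMod p), χ r
        = ∑ r : ZMod p, χ r := Finset.add_sum_erase _ _ (Finset.mem_univ _)
    have e1 : χ (-c) + ∑ r ∈ s, χ r = ∑ r ∈ Finset.univ.erase (0 : ZMod p), χ r :=
      Finset.add_sum_erase _ _ h0mem
    have e2 : ∑ r : ZMod p, χ r = 0 := quadraticChar_sum_zero hchar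
    have e3 : χ (0 : ZMod p) = 0 := quadraticChar_zero
    rw [hχnc] at e1
    omega
  have hz2 : ∑ r ∈ s, χ (r + c) = -1 := by
    have e0 : (fun r => χ (r + c)) 0 + ∑ r ∈ Finset.univ.erase (0 : ZMod p), χ (r + c)
        = ∑ r : ZMod p, χ (r + c) := Finset.add_sum_erase Finset.univ (fun r => χ (r + c)) (Finset.mem_univ 0)
    have e1 : (fun r => χ (r + c)) (-c) + ∑ r ∈ s, χ (r + c)
        = ∑ r ∈ Finset.univ.erase (0 : ZMod p), χ (r + c) :=
      Finset.add_sum_erase _ (fun r => χ (r + c)) h0mem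
    have e2 : ∑ r : ZMod p, χ (r + c) = 0 := by
      rw [Fintype.sum_equiv (Equiv.addRight c) (fun r => χ (r + c)) χ fun r => rfl]
      exact quadraticChar_sum_zero hchar
    simp only [zero_add, neg_add_cancel] at e0 e1
    rw [hχc] at e0
    rw [show χ (0 : ZMod p) = 0 from quadraticChar_zero] at e1
    omega
  have hz3 : ∑ r ∈ s, χ r * χ (r + c) = -1 := by
    have e0 : (fun r => χ r * χ (r + c)) 0
          + ∑ r ∈ Finset.univ.erase (0 : ZMod p), χ r * χ (r + c)
        = ∑ r : ZMod p, χ r * χ (r + c) := Finset.add_sum_erase Finset.univ (fun r => χ r * χ (r + c)) (Finset.mem_univ 0)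
    have e1 : (fun r => χ r * χ (r + c)) (-c) + ∑ r ∈ s, χ r * χ (r + c)
        = ∑ r ∈ Finset.univ.erase (0 : ZMod p), χ r * χ (r + c) :=
      Finset.add_sum_erase _ (fun r => χ r * χ (r + c)) h0mem
    have e2 : ∑ r : ZMod p, χ r * χ (r + c) = -1 := sum_quadChar_shift hp2 c hc
    simp only [zero_add, neg_add_cancel] at e0 e1
    rw [show χ (0 : ZMod p) = 0 from quadraticChar_zero] at e0 e1
    simp only [zero_mul, mul_zero] at e0 e1
    omega
  have hs1 : ∑ r ∈ s, ((χ r : ℤ) : ℂ) = 1 := by exact_mod_cast hz1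
  have hs2 : ∑ r ∈ s, ((χ (r + c) : ℤ) : ℂ) = -1 := by exact_mod_cast hz2
  have hs3 : ∑ r ∈ s, (((χ r : ℤ) : ℂ) * ((χ (r + c) : ℤ) : ℂ)) = -1 := by
    exact_mod_cast hz3
  rw [Finset.sum_add_distrib, Finset.sum_sub_distrib, Finset.sum_add_distrib,
    Finset.sum_const, ← Finset.mul_sum, ← Finset.mul_sum, ← Finset.mul_sum,
    hs1, hs2, hs3, hcard, hf0, hfnc, nsmul_eq_mul,
    Nat.cast_sub (by omega : 2 ≤ p)]
  push_cast
  ring
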